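/- Let a, r1, r2, r3 be real numbers with a > 0 and r1 < r2 < r3, and let Q : ℝ → ℝ be a differentiable function whose derivative is Q'(x) = 4a(x − r1)(x − r2)(x − r3) for all x. If 2r2 − r1 − r3 < 0, then r3 is the unique global minimizer of Q, i.e., Q(r3) < Q(x) for all x ≠ r3. -/

import Mathlib

/-- If `2r₂ − r₁ − r₃ < 0`, then `r₃` is the unique global
minimizer of `Q`. -/
theorem stmt_2 (a r₁ r₂ r₃ : ℝ) (ha : 0 < a) (h₁₂ : r₁ < r₂) (h₂₃ : r₂ < r₃)
    (Q : ℝ → ℝ) (hQ : Differentiable ℝ Q)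
    (hQ' : ∀ x : ℝ, deriv Q x = 4 * a * (x - r₁) * (x - r₂) * (x - r₃))
    (h : 2 * r₂ - r₁ - r₃ < 0) :
    ∀ x : ℝ, x ≠ r₃ → Q r₃ < Q x := by
  -- Antiderivative F with F' = Q'
  set F : ℝ → ℝ := fun x =>
    a * x ^ 4 - (4 * a / 3) * (r₁ + r₂ + r₃) * x ^ 3
      + 2 * a * (r₁ * r₂ + r₁ * r₃ + r₂ * r₃) * x ^ 2 - 4 * a * r₁ * r₂ * r₃ * x with hF
  have hFd : ∀ x : ℝ, HasDerivAt F (4 * a * (x - r₁) * (x - r₂) * (x - r₃)) x := by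
    intro x
    have h1 : HasDerivAt (fun x : ℝ => a * x ^ 4) (a * (4 * x ^ 3)) x :=
      (hasDerivAt_pow 4 x).const_mul a
    have h2 : HasDerivAt (fun x : ℝ => (4 * a / 3) * (r₁ + r₂ + r₃) * x ^ 3)
        ((4 * a / 3) * (r₁ + r₂ + r₃) * (3 * x ^ 2)) x :=
      (hasDerivAt_pow 3 x).const_mul _
    have h3 : HasDerivAt (fun x : ℝ => 2 * a * (r₁ * r₂ + r₁ * r₃ + r₂ * r₃) * x ^ 2)
        (2 * a * (r₁ * r₂ + r₁ * r₃ + r₂ * r₃) * (2 * x)) x := by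
      simpa using (hasDerivAt_pow 2 x).const_mul (2 * a * (r₁ * r₂ + r₁ * r₃ + r₂ * r₃))
    have h4 : HasDerivAt (fun x : ℝ => 4 * a * r₁ * r₂ * r₃ * x)
        (4 * a * r₁ * r₂ * r₃) x := by
      simpa using (hasDerivAt_id x).const_mul (4 * a * r₁ * r₂ * r₃)
    have := ((h1.sub h2).add h3).sub h4
    exact this.congr_deriv (by ring)
  -- Q - F is constant
  have hconst : ∀ x y : ℝ, Q x - F x = Q y - F y := by
    apply is_const_of_deriv_eq_zero
    · exact hQ.sub fun x => (hFd x).differentiableAt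
    · intro x
      rw [deriv_fun_sub (hQ x) (hFd x).differentiableAt, hQ' x, (hFd x).deriv, sub_self]
  -- key inequality Q r₃ < Q r₁
  have hkey : Q r₃ < Q r₁ := by
    have hF13 : F r₁ - F r₃ = a / 3 * ((r₃ - r₁) ^ 3 * (r₁ + r₃ - 2 * r₂)) := by
      simp only [hF]; ring
    have hpos : 0 < a / 3 * ((r₃ - r₁) ^ 3 * (r₁ + r₃ - 2 * r₂)) :=
      mul_pos (by linarith) (mul_pos (pow_pos (by linarith) 3) (by linarith))
    have h13 := hconst r₁ r₃
    clear_value F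
    linarith
  -- monotonicity pieces
  have hcont : Continuous Q := hQ.continuous
  have hmono3 : StrictMonoOn Q (Set.Ici r₃) := by
    apply strictMonoOn_of_deriv_pos (convex_Ici r₃) (hcont.continuousOn)
    intro x hx
    rw [interior_Ici] at hx
    rw [hQ' x]
    have h1 : 0 < x - r₁ := by linarith [hx.out]
    have h2 : 0 < x - r₂ := by linarith [hx.out]
    have h3 : 0 < x - r₃ := by linarith [hx.out]
    have p1 : 0 < 4 * a * (x - r₁) := by positivity
    exact mul_pos (mul_pos p1 h2) h3
  have hanti23 : StrictAntiOn Q (Set.Icc r₂ r₃) := by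
    apply strictAntiOn_of_deriv_neg (convex_Icc r₂ r₃) (hcont.continuousOn)
    intro x hx
    rw [interior_Icc] at hx
    rw [hQ' x]
    have h1 : 0 < x - r₁ := by linarith [hx.1]
    have h2 : 0 < x - r₂ := by linarith [hx.1]
    have h3 : x - r₃ < 0 := by linarith [hx.2]
    have p1 : 0 < 4 * a * (x - r₁) * (x - r₂) := by positivity
    exact mul_neg_of_pos_of_neg p1 h3
  have hmono12 : StrictMonoOn Q (Set.Icc r₁ r₂) := by
    apply strictMonoOn_of_deriv_pos (convex_Icc r₁ r₂) (hcont.continuousOn)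
    intro x hx
    rw [interior_Icc] at hx
    rw [hQ' x]
    have h1 : 0 < x - r₁ := by linarith [hx.1]
    have h2 : x - r₂ < 0 := by linarith [hx.2]
    have h3 : x - r₃ < 0 := by linarith [hx.2]
    have p1 : 0 < 4 * a * (x - r₁) := by positivity
    exact mul_pos_of_neg_of_neg (mul_neg_of_pos_of_neg p1 h2) h3
  have hanti1 : StrictAntiOn Q (Set.Iic r₁) := by
    apply strictAntiOn_of_deriv_neg (convex_Iic r₁) (hcont.continuousOn)
    intro x hx
    rw [interior_Iic] at hx
    rw [hQ' x]
    have h1 : x - r₁ < 0 := by linarith [hx.out]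
    have h2 : x - r₂ < 0 := by linarith [hx.out]
    have h3 : x - r₃ < 0 := by linarith [hx.out]
    have p1 : 4 * a * (x - r₁) < 0 := mul_neg_of_pos_of_neg (by linarith) h1
    exact mul_neg_of_pos_of_neg (mul_pos_of_neg_of_neg p1 h2) h3
  intro x hx
  rcases lt_or_gt_of_ne hx with hlt | hgt
  · -- x < r₃
    rcases le_or_gt r₂ x with h2x | hx2
    · exact hanti23 ⟨h2x, hlt.le⟩ ⟨h₂₃.le, le_refl r₃⟩ hlt
    · rcases le_or_gt r₁ x with h1x | hx1
      · have : Q r₁ ≤ Q x := by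
          rcases eq_or_lt_of_le h1x with rfl | h1x'
          · exact le_refl _
          · exact (hmono12 ⟨le_refl r₁, h₁₂.le⟩ ⟨h1x, hx2.le⟩ h1x').le
        linarith
      · have : Q r₁ < Q x := hanti1 hx1.le (le_refl r₁) hx1
        linarith
  · exact hmono3 (le_refl r₃) hgt.le hgt
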